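/- Fix positive integers n, α, β and constant coefficients a(m,i,j) ∈ ℂ (m ≤ α, i ≤ β, j ≤ n). If dim A¹ = dim A⁰ + Σ_{r=1}^{n−1} dim A⁰_r, then for every k ∈ {1,…,n−1} the system restricted to the variables x_{k+1},…,x_n is also in involution, i.e. dim A¹_k = dim A⁰_k + Σ_{r=k+1}^{n−1} dim A⁰_r. -/

import Mathlib

noncomputable section

/-- The linear map induced on 1-jets by a first-order constant-coefficient operator:
`(op1 a P) m = Σ_{i,j} a m i j · P i j`. -/
def op1 (n α β : ℕ) (a : Fin α → Fin β → Fin n → ℂ) :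
    (Fin β → Fin n → ℂ) →ₗ[ℂ] (Fin α → ℂ) where
  toFun P := fun m => ∑ i, ∑ j, a m i j * P i j
  map_add' P Q := by
    funext m
    simp only [Pi.add_apply]
    rw [← Finset.sum_add_distrib]
    refine Finset.sum_congr rfl fun i _ => ?_
    rw [← Finset.sum_add_distrib]
    exact Finset.sum_congr rfl fun j _ => by ring
  map_smul' c P := by
    funext m
    simp only [Pi.smul_apply, smul_eq_mul, RingHom.id_apply]
    rw [Finset.mul_sum]
    refine Finset.sum_congr rfl fun i _ => ?_
    rw [Finset.mul_sum]
    exact Finset.sum_congr rfl fun j _ => by ring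

/-- The prolonged linear map on 2-jets: `(op2 a P) m l = Σ_{i,j} a m i j · P i l j`. -/
def op2 (n α β : ℕ) (a : Fin α → Fin β → Fin n → ℂ) :
    (Fin β → Fin n → Fin n → ℂ) →ₗ[ℂ] (Fin α → Fin n → ℂ) where
  toFun P := fun m l => ∑ i, ∑ j, a m i j * P i l j
  map_add' P Q := by
    funext m l
    simp only [Pi.add_apply]
    rw [← Finset.sum_add_distrib]
    refine Finset.sum_congr rfl fun i _ => ?_
    rw [← Finset.sum_add_distrib]
    exact Finset.sum_congr rfl fun j _ => by ring
  map_smul' c P := by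
    funext m l
    simp only [Pi.smul_apply, smul_eq_mul, RingHom.id_apply]
    rw [Finset.mul_sum]
    refine Finset.sum_congr rfl fun i _ => ?_
    rw [Finset.mul_sum]
    exact Finset.sum_congr rfl fun j _ => by ring

/-- The twice-prolonged linear map on 3-jets:
`(op3 a P) m l l' = Σ_{i,j} a m i j · P i l l' j`. -/
def op3 (n α β : ℕ) (a : Fin α → Fin β → Fin n → ℂ) :
    (Fin β → Fin n → Fin n → Fin n → ℂ) →ₗ[ℂ] (Fin α → Fin n → Fin n → ℂ) where
  toFun P := fun m l l' => ∑ i, ∑ j, a m i j * P i l l' j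
  map_add' P Q := by
    funext m l l'
    simp only [Pi.add_apply]
    rw [← Finset.sum_add_distrib]
    refine Finset.sum_congr rfl fun i _ => ?_
    rw [← Finset.sum_add_distrib]
    exact Finset.sum_congr rfl fun j _ => by ring
  map_smul' c P := by
    funext m l l'
    simp only [Pi.smul_apply, smul_eq_mul, RingHom.id_apply]
    rw [Finset.mul_sum]
    refine Finset.sum_congr rfl fun i _ => ?_
    rw [Finset.mul_sum]
    exact Finset.sum_congr rfl fun j _ => by ring

/-- `S^β_2`: the space of `β`-vector-valued homogeneous 2-jets in `n` variables, i.e.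
families `P i j k` symmetric in the two lower indices `j, k`. -/
def Sym2Sub (n β : ℕ) : Submodule ℂ (Fin β → Fin n → Fin n → ℂ) where
  carrier := {P | ∀ i j k, P i j k = P i k j}
  add_mem' := by
    intro P Q hP hQ i j k
    simp only [Pi.add_apply, hP i j k, hQ i j k]
  zero_mem' := by intro i j k; rfl
  smul_mem' := by
    intro c P hP i j k
    simp only [Pi.smul_apply, hP i j k]

/-- `S^β_3`: the space of `β`-vector-valued homogeneous 3-jets in `n` variables, i.e.
families `P i j k l` symmetric under all permutations of the lower indices `j, k, l`. -/
def Sym3Sub (n β : ℕ) : Submodule ℂ (Fin β → Fin n → Fin n → Fin n → ℂ) where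
  carrier := {P | (∀ i j k l, P i j k l = P i k j l) ∧ (∀ i j k l, P i j k l = P i j l k) ∧
    (∀ i j k l, P i j k l = P i l k j)}
  add_mem' := by
    rintro P Q ⟨hP1, hP2, hP3⟩ ⟨hQ1, hQ2, hQ3⟩
    exact ⟨fun i j k l => by simp only [Pi.add_apply, hP1 i j k l, hQ1 i j k l],
      fun i j k l => by simp only [Pi.add_apply, hP2 i j k l, hQ2 i j k l],
      fun i j k l => by simp only [Pi.add_apply, hP3 i j k l, hQ3 i j k l]⟩
  zero_mem' := ⟨fun _ _ _ _ => rfl, fun _ _ _ _ => rfl, fun _ _ _ _ => rfl⟩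
  smul_mem' := by
    rintro c P ⟨hP1, hP2, hP3⟩
    exact ⟨fun i j k l => by simp only [Pi.smul_apply, hP1 i j k l],
      fun i j k l => by simp only [Pi.smul_apply, hP2 i j k l],
      fun i j k l => by simp only [Pi.smul_apply, hP3 i j k l]⟩

/-- The subspace of 1-jets `P i j` vanishing whenever the lower index `j` is one of the
first `r` variables (`j.1 < r` in zero-indexed notation, i.e. `j ≤ r` one-indexed). -/
def Van1 (n β : ℕ) (r : ℕ) : Submodule ℂ (Fin β → Fin n → ℂ) where
  carrier := {P | ∀ i j, j.1 < r → P i j = 0}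
  add_mem' := by
    intro P Q hP hQ i j hj
    simp only [Pi.add_apply, hP i j hj, hQ i j hj, add_zero]
  zero_mem' := by intro i j hj; rfl
  smul_mem' := by
    intro c P hP i j hj
    simp only [Pi.smul_apply, hP i j hj, smul_zero]

/-- The subspace of 2-jets `P i j k` vanishing whenever some lower index is one of the
first `r` variables. -/
def Van2 (n β : ℕ) (r : ℕ) : Submodule ℂ (Fin β → Fin n → Fin n → ℂ) where
  carrier := {P | ∀ i j k, j.1 < r ∨ k.1 < r → P i j k = 0}
  add_mem' := by
    intro P Q hP hQ i j k hjk
    simp only [Pi.add_apply, hP i j k hjk, hQ i j k hjk, add_zero]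
  zero_mem' := by intro i j k hjk; rfl
  smul_mem' := by
    intro c P hP i j k hjk
    simp only [Pi.smul_apply, hP i j k hjk, smul_zero]



lemma aux_finrank_split {V W : Type*} [AddCommGroup V] [Module ℂ V] [AddCommGroup W] [Module ℂ W]
    [FiniteDimensional ℂ V] (f : V →ₗ[ℂ] W) (S : Submodule ℂ V) :
    Module.finrank ℂ S =
      Module.finrank ℂ (S.map f) + Module.finrank ℂ ↥(S ⊓ LinearMap.ker f) := by
  have h := LinearMap.finrank_range_add_finrank_ker (f.domRestrict S)
  rw [LinearMap.range_domRestrict, LinearMap.ker_domRestrict] at h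
  rw [← h]
  congr 1
  have e1 : (LinearMap.ker f).comap S.subtype = (S ⊓ LinearMap.ker f).comap S.subtype := by
    rw [Submodule.comap_inf, Submodule.comap_subtype_self, top_inf_eq]
  rw [e1]
  exact ((Submodule.comapSubtypeEquivOfLe
    (inf_le_left : S ⊓ LinearMap.ker f ≤ S)).finrank_eq)

lemma aux_squeeze (n : ℕ) (e d : ℕ → ℕ) (hstep : ∀ r < n, e r ≤ d r + e (r + 1))
    (hend : e n = 0) (h0 : e 0 = ∑ r ∈ Finset.range n, d r) :
    ∀ k ≤ n, e k = ∑ r ∈ Finset.Ico k n, d r := by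
  have hub : ∀ j k, k + j = n → e k ≤ ∑ r ∈ Finset.Ico k n, d r := by
    intro j
    induction j with
    | zero =>
      intro k hk
      have hkn : k = n := by omega
      subst hkn; simp [hend]
    | succ j ih =>
      intro k hk
      have hkn : k < n := by omega
      rw [Finset.sum_eq_sum_Ico_succ_bot hkn]
      exact le_trans (hstep k hkn) (Nat.add_le_add_left (ih (k + 1) (by omega)) _)
  have hlb : ∀ k ≤ n, e 0 ≤ ∑ r ∈ Finset.range k, d r + e k := by
    intro k
    induction k with
    | zero => simp
    | succ k ih =>
      intro hk
      have h1 := ih (by omega)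
      have h2 := hstep k (by omega)
      rw [Finset.sum_range_succ]
      omega
  intro k hk
  have h1 := hub (n - k) k (by omega)
  have h2 := hlb k hk
  have h3 : ∑ r ∈ Finset.range k, d r + ∑ r ∈ Finset.Ico k n, d r = ∑ r ∈ Finset.range n, d r := by
    rw [Finset.range_eq_Ico, Finset.range_eq_Ico]
    exact Finset.sum_Ico_consecutive d (Nat.zero_le k) hk
  omega


lemma mem_Van1_iff {n β : ℕ} {r : ℕ} {P : Fin β → Fin n → ℂ} :
    P ∈ Van1 n β r ↔ ∀ i j, j.1 < r → P i j = 0 := Iff.rfl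

lemma mem_Van2_iff {n β : ℕ} {r : ℕ} {P : Fin β → Fin n → Fin n → ℂ} :
    P ∈ Van2 n β r ↔ ∀ i j k, j.1 < r ∨ k.1 < r → P i j k = 0 := Iff.rfl

lemma mem_Sym2Sub_iff {n β : ℕ} {P : Fin β → Fin n → Fin n → ℂ} :
    P ∈ Sym2Sub n β ↔ ∀ i j k, P i j k = P i k j := Iff.rfl

/-- The slicing map at index `r`, sending a 2-jet `P` to the 1-jet `fun i j => P i r j`. -/
def sliceMap (n β : ℕ) (r : Fin n) :
    (Fin β → Fin n → Fin n → ℂ) →ₗ[ℂ] (Fin β → Fin n → ℂ) where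
  toFun P := fun i j => P i r j
  map_add' _ _ := rfl
  map_smul' _ _ := rfl

lemma step_ineq (n α β : ℕ) (a : Fin α → Fin β → Fin n → ℂ) (r : ℕ) (hr : r < n) :
    Module.finrank ℂ ↥(Sym2Sub n β ⊓ LinearMap.ker (op2 n α β a) ⊓ Van2 n β r) ≤
      Module.finrank ℂ ↥(LinearMap.ker (op1 n α β a) ⊓ Van1 n β r) +
        Module.finrank ℂ ↥(Sym2Sub n β ⊓ LinearMap.ker (op2 n α β a) ⊓ Van2 n β (r + 1)) := by
  set f := sliceMap n β ⟨r, hr⟩ with hf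
  set S := Sym2Sub n β ⊓ LinearMap.ker (op2 n α β a) ⊓ Van2 n β r with hS
  have hsplit := aux_finrank_split f S
  have hmap : S.map f ≤ LinearMap.ker (op1 n α β a) ⊓ Van1 n β r := by
    rintro Q ⟨P, ⟨⟨hsym, hker⟩, hvan⟩, rfl⟩
    refine ⟨?_, ?_⟩
    · simp only [SetLike.mem_coe, LinearMap.mem_ker]
      funext m
      have h := congrFun (congrFun (LinearMap.mem_ker.mp hker) m) ⟨r, hr⟩
      exact h
    · intro i j hj
      exact hvan i ⟨r, hr⟩ j (Or.inr hj)
  have hker_eq : S ⊓ LinearMap.ker f =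
      Sym2Sub n β ⊓ LinearMap.ker (op2 n α β a) ⊓ Van2 n β (r + 1) := by
    ext P
    simp only [hS, Submodule.mem_inf, LinearMap.mem_ker]
    constructor
    · rintro ⟨⟨⟨hsym, hker⟩, hvan⟩, hfP⟩
      refine ⟨⟨hsym, hker⟩, ?_⟩
      intro i j k h
      by_cases hc : j.1 < r ∨ k.1 < r
      · exact hvan i j k hc
      · have hjr : j.1 = r ∨ k.1 = r := by omega
        rcases hjr with hjr | hkr
        · have : j = ⟨r, hr⟩ := Fin.ext hjr
          rw [this]
          exact congrFun (congrFun hfP i) k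
        · have : k = ⟨r, hr⟩ := Fin.ext hkr
          rw [this, hsym i j ⟨r, hr⟩]
          exact congrFun (congrFun hfP i) j
    · rintro ⟨⟨hsym, hker⟩, hvan⟩
      refine ⟨⟨⟨hsym, hker⟩, fun i j k h => hvan i j k (by omega)⟩, ?_⟩
      funext i j
      exact hvan i ⟨r, hr⟩ j (Or.inl (Nat.lt_succ_self r))
  calc Module.finrank ℂ ↥S
      = Module.finrank ℂ ↥(S.map f) + Module.finrank ℂ ↥(S ⊓ LinearMap.ker f) := hsplit
    _ ≤ _ := add_le_add (Submodule.finrank_mono hmap) (le_of_eq (by rw [hker_eq]))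

/-- Stability of involutivity under restriction to the coordinate plane generated by
`x_{k+1},…,x_n` (used in the proof of Proposition 4.8): if the tableau of `A` is in
involution, then for every `k ∈ {1,…,n−1}` one has
`dim A¹_k = dim A⁰_k + Σ_{r=k+1}^{n−1} dim A⁰_r`. -/
theorem involutive_restriction (n α β : ℕ) (hn : 0 < n) (hα : 0 < α) (hβ : 0 < β)
    (a : Fin α → Fin β → Fin n → ℂ)
    (H2 : Module.finrank ℂ ↥(Sym2Sub n β ⊓ LinearMap.ker (op2 n α β a)) =
      Module.finrank ℂ ↥(LinearMap.ker (op1 n α β a)) +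
        ∑ r ∈ Finset.Icc 1 (n - 1),
          Module.finrank ℂ ↥(LinearMap.ker (op1 n α β a) ⊓ Van1 n β r)) :
    ∀ k ∈ Finset.Icc 1 (n - 1),
      Module.finrank ℂ
          ↥(Sym2Sub n β ⊓ LinearMap.ker (op2 n α β a) ⊓ Van2 n β k) =
        Module.finrank ℂ ↥(LinearMap.ker (op1 n α β a) ⊓ Van1 n β k) +
          ∑ r ∈ Finset.Icc (k + 1) (n - 1),
            Module.finrank ℂ ↥(LinearMap.ker (op1 n α β a) ⊓ Van1 n β r) := by
  intro k hk
  rw [Finset.mem_Icc] at hk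
  have hVan2_0 : Van2 n β 0 = ⊤ := by
    rw [eq_top_iff]
    intro P _ i j k h
    exact absurd h (by omega)
  have hVan1_0 : Van1 n β 0 = ⊤ := by
    rw [eq_top_iff]
    intro P _ i j h
    exact absurd h (by omega)
  have hbot : Sym2Sub n β ⊓ LinearMap.ker (op2 n α β a) ⊓ Van2 n β n = ⊥ := by
    rw [eq_bot_iff]
    rintro P ⟨-, hvan⟩
    rw [Submodule.mem_bot]
    funext i j k
    exact hvan i j k (Or.inl j.2)
  have hIcc : Finset.Icc 1 (n - 1) = Finset.Ico 1 n := by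
    ext x; simp only [Finset.mem_Icc, Finset.mem_Ico]; omega
  have hend : Module.finrank ℂ
      ↥(Sym2Sub n β ⊓ LinearMap.ker (op2 n α β a) ⊓ Van2 n β n) = 0 := by
    rw [hbot, finrank_bot]
  have h0 : Module.finrank ℂ
      ↥(Sym2Sub n β ⊓ LinearMap.ker (op2 n α β a) ⊓ Van2 n β 0) =
      ∑ r ∈ Finset.range n, Module.finrank ℂ ↥(LinearMap.ker (op1 n α β a) ⊓ Van1 n β r) := by
    rw [hVan2_0, inf_top_eq, H2, Finset.range_eq_Ico, Finset.sum_eq_sum_Ico_succ_bot hn,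
      hVan1_0, inf_top_eq, hIcc]
  have key := aux_squeeze n
    (fun r => Module.finrank ℂ ↥(Sym2Sub n β ⊓ LinearMap.ker (op2 n α β a) ⊓ Van2 n β r))
    (fun r => Module.finrank ℂ ↥(LinearMap.ker (op1 n α β a) ⊓ Van1 n β r))
    (fun r hr => step_ineq n α β a r hr) hend h0 k (by omega)
  have hkn : k < n := by omega
  rw [Finset.sum_eq_sum_Ico_succ_bot hkn] at key
  have hIcc2 : Finset.Icc (k + 1) (n - 1) = Finset.Ico (k + 1) n := by
    ext x; simp only [Finset.mem_Icc, Finset.mem_Ico]; omega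
  rw [hIcc2]
  exact key

end
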